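/- Let G be a finite connected simple graph with at least three vertices, and let δ ∈ (0,1] be a real number satisfying Sc(G,δ) = 1 (equivalently, δ is the unique positive root of the modified Schultz polynomial Sc*(G,x) = 1 − Sc(G,x)). Then δ > 1/(MS(G) + 1). -/
import Mathlib


open scoped Classical in
/-- The Schultz polynomial `Sc(G,x)`: the sum over unordered pairs of distinct vertices of
`(deg a + deg b) * x ^ d(a,b)`. -/
noncomputable def schultzPoly {V : Type*} [Fintype V] (G : SimpleGraph V) (x : ℝ) : ℝ :=
  ∑ p ∈ Finset.univ.filter (fun p : Sym2 V => ¬ p.IsDiag),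
    Sym2.lift ⟨fun a b => ((G.degree a : ℝ) + (G.degree b : ℝ)) * x ^ G.dist a b,
      fun a b => by dsimp only; rw [SimpleGraph.dist_comm]; ring⟩ p

open scoped Classical in
/-- `s_k(G)`: the sum of `deg a + deg b` over all unordered pairs of distinct vertices at
distance exactly `k` (equal to `0` if there is no such pair). -/
noncomputable def schultzCoeff {V : Type*} [Fintype V] (G : SimpleGraph V) (k : ℕ) : ℕ :=
  ∑ p ∈ Finset.univ.filter (fun p : Sym2 V => ¬ p.IsDiag ∧
      Sym2.lift ⟨fun a b => G.dist a b, fun _ _ => SimpleGraph.dist_comm⟩ p = k),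
    Sym2.lift ⟨fun a b => G.degree a + G.degree b, fun a b => by dsimp only; ring⟩ p

/-- `MS(G) = max { s_k(G) : k ≥ 1 }`. -/
noncomputable def maxSchultzCoeff {V : Type*} [Fintype V] (G : SimpleGraph V) : ℕ :=
  sSup {m : ℕ | ∃ k, 1 ≤ k ∧ schultzCoeff G k = m}

open scoped Classical in
lemma schultz_expand {V : Type*} [Fintype V] (G : SimpleGraph V) (x : ℝ) :
    schultzPoly G x = ∑ k ∈ Finset.range (Fintype.card V),
      (schultzCoeff G k : ℝ) * x ^ k := by
  classical
  have hmap : ∀ p ∈ Finset.univ.filter (fun p : Sym2 V => ¬ p.IsDiag),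
      Sym2.lift ⟨fun a b => G.dist a b, fun _ _ => SimpleGraph.dist_comm⟩ p
        ∈ Finset.range (Fintype.card V) := by
    intro p _
    induction p using Sym2.ind with
    | _ a b =>
      simp only [Sym2.lift_mk, Finset.mem_range]
      by_cases hr : G.Reachable a b
      · obtain ⟨w⟩ := hr
        calc G.dist a b ≤ w.bypass.length := SimpleGraph.dist_le _
          _ < Fintype.card V := w.bypass_isPath.length_lt
      · rw [SimpleGraph.dist_eq_zero_of_not_reachable hr]
        exact Fintype.card_pos_iff.mpr ⟨a⟩
  rw [schultzPoly, ← Finset.sum_fiberwise_of_maps_to hmap]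
  refine Finset.sum_congr rfl fun k _ => ?_
  rw [schultzCoeff]
  have hset : (Finset.univ.filter (fun p : Sym2 V => ¬ p.IsDiag)).filter
      (fun p => Sym2.lift ⟨fun a b => G.dist a b, fun _ _ => SimpleGraph.dist_comm⟩ p = k)
      = Finset.univ.filter (fun p : Sym2 V => ¬ p.IsDiag ∧
          Sym2.lift ⟨fun a b => G.dist a b, fun _ _ => SimpleGraph.dist_comm⟩ p = k) := by
    ext p; simp [and_assoc]
  rw [hset, Nat.cast_sum, Finset.sum_mul]
  refine Finset.sum_congr rfl fun p hp => ?_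
  simp only [Finset.mem_filter, Finset.mem_univ, true_and] at hp
  revert hp
  induction p using Sym2.ind with
  | _ a b =>
    intro hp
    simp only [Sym2.lift_mk] at hp ⊢
    rw [hp.2]
    push_cast
    ring

/-- **Theorem.** Let `G` be a finite connected simple graph with at least three vertices and let `δ ∈ (0,1]` satisfy `Sc(G,δ) = 1` (i.e., `δ` is the unique positive root of `Sc*(G,x) = 1 - Sc(G,x)`). Then `δ > 1 / (MS(G) + 1)`. -/
theorem schultz_root_index_lower_bound {V : Type*} [Fintype V] (G : SimpleGraph V)
    (hconn : G.Connected) (hcard : 3 ≤ Fintype.card V)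
    (δ : ℝ) (hδ : δ ∈ Set.Ioc (0 : ℝ) 1)
    (hroot : schultzPoly G δ = 1) :
    1 / ((maxSchultzCoeff G : ℝ) + 1) < δ := by
  classical
  obtain ⟨hδ0, hδ1⟩ := hδ
  set M := maxSchultzCoeff G with hM
  -- bounded above
  have hbdd : BddAbove {m : ℕ | ∃ k, 1 ≤ k ∧ schultzCoeff G k = m} := by
    refine ⟨∑ p ∈ Finset.univ.filter (fun p : Sym2 V => ¬ p.IsDiag),
      Sym2.lift ⟨fun a b => G.degree a + G.degree b, fun a b => by dsimp only; ring⟩ p,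
      fun m hm => ?_⟩
    obtain ⟨k, _, rfl⟩ := hm
    apply Finset.sum_le_sum_of_subset
    intro p hp
    simp only [Finset.mem_filter, Finset.mem_univ, true_and] at hp ⊢
    exact hp.1
  have hle : ∀ k, 1 ≤ k → schultzCoeff G k ≤ M :=
    fun k hk => le_csSup hbdd ⟨k, hk, rfl⟩
  -- M ≥ 1
  have hM1 : 1 ≤ M := by
    have h2 : 1 < Fintype.card V := by omega
    obtain ⟨a, b, hab⟩ := Fintype.exists_pair_of_one_lt_card h2
    have hd : 1 ≤ G.dist a b := hconn.pos_dist_of_ne hab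
    have hdeg : 1 ≤ G.degree a := by
      rw [Nat.one_le_iff_ne_zero]
      intro h0
      obtain ⟨w⟩ := hconn.1 a b
      cases w with
      | nil => exact hab rfl
      | cons h _ =>
        have := (G.degree_pos_iff_exists_adj a).mpr ⟨_, h⟩
        omega
    have hsk : 1 ≤ schultzCoeff G (G.dist a b) := by
      have hmem : (s(a, b) : Sym2 V) ∈ Finset.univ.filter (fun p : Sym2 V => ¬ p.IsDiag ∧
          Sym2.lift ⟨fun a b => G.dist a b, fun _ _ => SimpleGraph.dist_comm⟩ p = G.dist a b) := by
        simp [Sym2.mk_isDiag_iff, hab]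
      calc 1 ≤ G.degree a + G.degree b := by omega
        _ = Sym2.lift ⟨fun a b => G.degree a + G.degree b, fun a b => by dsimp only; ring⟩
            (s(a,b) : Sym2 V) := rfl
        _ ≤ schultzCoeff G (G.dist a b) := Finset.single_le_sum (fun _ _ => Nat.zero_le _) hmem
    exact le_trans hsk (hle _ hd)
  -- s_0 = 0
  have hs0 : schultzCoeff G 0 = 0 := by
    rw [schultzCoeff]
    apply Finset.sum_eq_zero
    intro p hp
    exfalso
    revert hp
    induction p using Sym2.ind with
    | _ a b =>
      intro hp
      simp only [Finset.mem_filter, Sym2.lift_mk, Sym2.mk_isDiag_iff] at hp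
      exact hp.2.1 (hconn.dist_eq_zero_iff.mp hp.2.2)
  -- main argument
  by_contra hcon
  push_neg at hcon
  set N := Fintype.card V
  have hMR : (1 : ℝ) ≤ (M : ℝ) := by exact_mod_cast hM1
  have hδlt1 : δ < 1 := lt_of_le_of_lt hcon (by
    rw [div_lt_one (by positivity)]; linarith)
  have key : schultzPoly G δ < 1 := by
    rw [schultz_expand]
    have h1 : ∑ k ∈ Finset.range N, (schultzCoeff G k : ℝ) * δ ^ k
        ≤ ∑ k ∈ Finset.range N, (M : ℝ) * δ ^ k - (M : ℝ) * δ ^ 0 := by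
      have hN : 0 < N := by omega
      rw [← Finset.sum_erase_add _ _ (Finset.mem_range.mpr hN)]
      have : (schultzCoeff G 0 : ℝ) * δ ^ 0 = 0 := by simp [hs0]
      rw [← Finset.sum_erase_add (Finset.range N) (fun k => (M:ℝ) * δ ^ k)
        (Finset.mem_range.mpr hN), this]
      have h2 : ∑ k ∈ (Finset.range N).erase 0, (schultzCoeff G k : ℝ) * δ ^ k
          ≤ ∑ k ∈ (Finset.range N).erase 0, (M : ℝ) * δ ^ k := by
        refine Finset.sum_le_sum fun k hk => ?_
        have hk1 : 1 ≤ k := Nat.one_le_iff_ne_zero.mpr (Finset.ne_of_mem_erase hk)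
        have := hle k hk1
        have hcast : (schultzCoeff G k : ℝ) ≤ (M : ℝ) := by exact_mod_cast this
        exact mul_le_mul_of_nonneg_right hcast (by positivity)
      linarith
    have h3 : ∑ k ∈ Finset.range N, (M : ℝ) * δ ^ k = (M : ℝ) * ((δ ^ N - 1) / (δ - 1)) := by
      rw [← Finset.mul_sum, geom_sum_eq (ne_of_lt hδlt1)]
    have h4 : (M : ℝ) * ((δ ^ N - 1) / (δ - 1)) - (M : ℝ) < 1 := by
      have hδN : 0 < δ ^ N := by positivity
      have hδM : δ * ((M : ℝ) + 1) ≤ 1 := (le_div_iff₀ (by positivity)).mp hcon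
      have hS : (δ ^ N - 1) / (δ - 1) * (δ - 1) = δ ^ N - 1 :=
        div_mul_cancel₀ _ (by linarith)
      set S := (δ ^ N - 1) / (δ - 1) with hSdef
      nlinarith [hS, hδN, hδM, hMR, mul_pos hδ0 hδN]
    calc ∑ k ∈ Finset.range N, (schultzCoeff G k : ℝ) * δ ^ k
        ≤ ∑ k ∈ Finset.range N, (M : ℝ) * δ ^ k - (M : ℝ) * δ ^ 0 := h1
      _ = (M : ℝ) * ((δ ^ N - 1) / (δ - 1)) - (M : ℝ) := by rw [h3]; ring_nf
      _ < 1 := h4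
  linarith [hroot]
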